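/- For p ∈ K* with p ≠ 1 and any g ∈ K[t], the quantum generalized Heisenberg algebras H_q(pt, g(t)) and H_q(pt + k, g(t - k(1-p)⁻¹)) are isomorphic via t ↦ t - k(1-p)⁻¹, x ↦ x, y ↦ y (reading the second algebra's generators). -/

import Mathlib

/- STATEMENT 19: for p ∈ K*, p ≠ 1, and any g ∈ K[t], k ∈ K, the quantum
generalized Heisenberg algebras H_q(pt, g(t)) and H_q(pt + k, g(t - k(1-p)⁻¹)) are
isomorphic via t ↦ t - k(1-p)⁻¹, x ↦ x, y ↦ y (reading the second algebra's
generators). -/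

noncomputable section

open FreeAlgebra Polynomial

variable (K : Type) [Field K]

/-- Relations of `H_q(f,g)`. t = ι 0, x = ι 1, y = ι 2. -/
inductive qghRel (q : K) (f g : Polynomial K) :
    FreeAlgebra K (Fin 3) → FreeAlgebra K (Fin 3) → Prop
  | r1 : qghRel q f g (ι K (0 : Fin 3) * ι K (1 : Fin 3))
      (ι K (1 : Fin 3) * Polynomial.aeval (ι K (0 : Fin 3)) f)
  | r2 : qghRel q f g (ι K (2 : Fin 3) * ι K (0 : Fin 3))
      (Polynomial.aeval (ι K (0 : Fin 3)) f * ι K (2 : Fin 3))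
  | r3 : qghRel q f g (ι K (2 : Fin 3) * ι K (1 : Fin 3) - q • (ι K (1 : Fin 3) * ι K (2 : Fin 3)))
      (Polynomial.aeval (ι K (0 : Fin 3)) g)

/-- The quantum generalized Heisenberg algebra `H_q(f,g)`. -/
abbrev QGH (q : K) (f g : Polynomial K) := RingQuot (qghRel K q f g)

/-- Generators of `H_q(f,g)`. -/
def qghGen (q : K) (f g : Polynomial K) (i : Fin 3) : QGH K q f g :=
  RingQuot.mkAlgHom K (qghRel K q f g) (ι K i)

set_option maxHeartbeats 1600000 in
/-- `H_q(pt, g(t)) ≅ H_q(pt + k, g(t - k(1-p)⁻¹))` via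
`t ↦ t - k(1-p)⁻¹`, `x ↦ x`, `y ↦ y`. -/
theorem stmt19 (q p k : K) (hp0 : p ≠ 0) (hp1 : p ≠ 1) (g : Polynomial K) :
    letI f₁ : Polynomial K := C p * X
    letI f₂ : Polynomial K := C p * X + C k
    letI g₂ : Polynomial K := g.comp (X - C (k * (1 - p)⁻¹))
    ∃ ψ : QGH K q f₁ g ≃ₐ[K] QGH K q f₂ g₂,
      ψ (qghGen K q f₁ g 0) = qghGen K q f₂ g₂ 0 - (k * (1 - p)⁻¹) • 1 ∧
      ψ (qghGen K q f₁ g 1) = qghGen K q f₂ g₂ 1 ∧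
      ψ (qghGen K q f₁ g 2) = qghGen K q f₂ g₂ 2 := by
  set c : K := k * (1 - p)⁻¹ with hcdef
  set f₁ : Polynomial K := C p * X with hf₁
  set f₂ : Polynomial K := C p * X + C k with hf₂
  set g₂ : Polynomial K := g.comp (X - C c) with hg₂
  have h1p : (1 : K) - p ≠ 0 := sub_ne_zero.mpr (Ne.symm hp1)
  have hk : k = c - p * c := by
    rw [hcdef, ← one_sub_mul, mul_comm k, mul_inv_cancel_left₀ h1p]
  set T1 : QGH K q f₁ g := qghGen K q f₁ g 0 with hT1
  set X1 : QGH K q f₁ g := qghGen K q f₁ g 1 with hX1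
  set Y1 : QGH K q f₁ g := qghGen K q f₁ g 2 with hY1
  set T2 : QGH K q f₂ g₂ := qghGen K q f₂ g₂ 0 with hT2
  set X2 : QGH K q f₂ g₂ := qghGen K q f₂ g₂ 1 with hX2
  set Y2 : QGH K q f₂ g₂ := qghGen K q f₂ g₂ 2 with hY2
  -- relations in the two algebras
  have hTX2 : T2 * X2 = X2 * (algebraMap K _ p * T2 + algebraMap K _ k) := by
    have := RingQuot.mkAlgHom_rel K (qghRel.r1 (q := q) (f := f₂) (g := g₂))
    simpa [qghGen, hf₂, map_add, map_mul, ← Polynomial.aeval_algHom_apply,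
      Algebra.smul_def, hT2, hX2, hY2] using this
  have hYT2 : Y2 * T2 = (algebraMap K _ p * T2 + algebraMap K _ k) * Y2 := by
    have := RingQuot.mkAlgHom_rel K (qghRel.r2 (q := q) (f := f₂) (g := g₂))
    simpa [qghGen, hf₂, map_add, map_mul, ← Polynomial.aeval_algHom_apply,
      Algebra.smul_def, hT2, hX2, hY2] using this
  have hYX2 : Y2 * X2 - q • (X2 * Y2) = Polynomial.aeval T2 g₂ := by
    have := RingQuot.mkAlgHom_rel K (qghRel.r3 (q := q) (f := f₂) (g := g₂))
    simpa [qghGen, map_sub, map_mul, ← Polynomial.aeval_algHom_apply, hT2, hX2, hY2] using this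
  have hTX1 : T1 * X1 = X1 * (algebraMap K _ p * T1) := by
    have := RingQuot.mkAlgHom_rel K (qghRel.r1 (q := q) (f := f₁) (g := g))
    simpa [qghGen, hf₁, map_mul, ← Polynomial.aeval_algHom_apply,
      Algebra.smul_def, hT1, hX1, hY1] using this
  have hYT1 : Y1 * T1 = (algebraMap K _ p * T1) * Y1 := by
    have := RingQuot.mkAlgHom_rel K (qghRel.r2 (q := q) (f := f₁) (g := g))
    simpa [qghGen, hf₁, map_mul, ← Polynomial.aeval_algHom_apply,
      Algebra.smul_def, hT1, hX1, hY1] using this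
  have hYX1 : Y1 * X1 - q • (X1 * Y1) = Polynomial.aeval T1 g := by
    have := RingQuot.mkAlgHom_rel K (qghRel.r3 (q := q) (f := f₁) (g := g))
    simpa [qghGen, map_sub, map_mul, ← Polynomial.aeval_algHom_apply, hT1, hX1, hY1] using this
  -- the forward free-algebra map
  let F0 : FreeAlgebra K (Fin 3) →ₐ[K] QGH K q f₂ g₂ :=
    FreeAlgebra.lift K ![T2 - algebraMap K _ c, X2, Y2]
  have hF0_0 : F0 (ι K (0 : Fin 3)) = T2 - algebraMap K _ c := by simp [F0]
  have hF0_1 : F0 (ι K (1 : Fin 3)) = X2 := by simp [F0]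
  have hF0_2 : F0 (ι K (2 : Fin 3)) = Y2 := by simp [F0]
  have hMk2 : algebraMap K (QGH K q f₂ g₂) k
      = algebraMap K _ c - algebraMap K _ p * algebraMap K _ c := by
    rw [← map_mul, ← map_sub]; exact congrArg _ hk
  have hMk1 : algebraMap K (QGH K q f₁ g) k
      = algebraMap K _ c - algebraMap K _ p * algebraMap K _ c := by
    rw [← map_mul, ← map_sub]; exact congrArg _ hk
  have hkc : k - c = -(p * c) := by rw [hk]; ring
  have hck : p * c + k = c := by rw [hk]; ring
  have hF : ∀ ⦃a b : FreeAlgebra K (Fin 3)⦄, qghRel K q f₁ g a b → F0 a = F0 b := by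
    intro a b h
    induction h with
    | r1 =>
        simp only [map_mul]
        rw [← Polynomial.aeval_algHom_apply, hF0_0, hF0_1]
        simp only [hf₁, map_mul, Polynomial.aeval_C, Polynomial.aeval_X]
        rw [sub_mul, hTX2, Algebra.commutes c X2,
          mul_add X2 (algebraMap K _ p * T2) (algebraMap K _ k), add_sub_assoc,
          ← mul_sub X2 (algebraMap K _ k) (algebraMap K _ c), ← map_sub, hkc, map_neg,
          mul_neg X2, ← sub_eq_add_neg, map_mul,
          ← mul_sub X2 (algebraMap K _ p * T2) (algebraMap K _ p * algebraMap K _ c),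
          ← mul_sub (algebraMap K _ p) T2 (algebraMap K _ c)]
    | r2 =>
        simp only [map_mul]
        rw [← Polynomial.aeval_algHom_apply, hF0_0, hF0_2]
        simp only [hf₁, map_mul, Polynomial.aeval_C, Polynomial.aeval_X]
        rw [mul_sub, hYT2, ← Algebra.commutes c Y2,
          add_mul (algebraMap K _ p * T2) (algebraMap K _ k) Y2, add_sub_assoc,
          ← sub_mul (algebraMap K _ k) (algebraMap K _ c) Y2, ← map_sub, hkc, map_neg,
          neg_mul _ Y2, ← sub_eq_add_neg, map_mul,
          ← sub_mul (algebraMap K _ p * T2) (algebraMap K _ p * algebraMap K _ c) Y2,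
          ← mul_sub (algebraMap K _ p) T2 (algebraMap K _ c)]
    | r3 =>
        simp only [map_sub, map_mul, map_smul]
        rw [← Polynomial.aeval_algHom_apply, hF0_0, hF0_1, hF0_2, hYX2]
        calc (aeval T2) g₂ = aeval (aeval T2 (X - C c)) g := Polynomial.aeval_comp T2
          _ = aeval (T2 - algebraMap K _ c) g := by simp
  -- the backward free-algebra map
  let G0 : FreeAlgebra K (Fin 3) →ₐ[K] QGH K q f₁ g :=
    FreeAlgebra.lift K ![T1 + algebraMap K _ c, X1, Y1]
  have hG0_0 : G0 (ι K (0 : Fin 3)) = T1 + algebraMap K _ c := by simp [G0]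
  have hG0_1 : G0 (ι K (1 : Fin 3)) = X1 := by simp [G0]
  have hG0_2 : G0 (ι K (2 : Fin 3)) = Y1 := by simp [G0]
  have hG : ∀ ⦃a b : FreeAlgebra K (Fin 3)⦄, qghRel K q f₂ g₂ a b → G0 a = G0 b := by
    intro a b h
    induction h with
    | r1 =>
        simp only [map_mul]
        rw [← Polynomial.aeval_algHom_apply, hG0_0, hG0_1]
        simp only [hf₂, map_add, map_mul, Polynomial.aeval_C, Polynomial.aeval_X]
        rw [add_mul, hTX1, Algebra.commutes c X1,
          mul_add (algebraMap K _ p) T1 (algebraMap K _ c),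
          mul_add X1 (algebraMap K _ p * T1 + algebraMap K _ p * algebraMap K _ c)
            (algebraMap K _ k),
          mul_add X1 (algebraMap K _ p * T1) (algebraMap K _ p * algebraMap K _ c),
          add_assoc, ← mul_add X1 (algebraMap K _ p * algebraMap K _ c) (algebraMap K _ k),
          ← map_mul, ← map_add, hck]
    | r2 =>
        simp only [map_mul]
        rw [← Polynomial.aeval_algHom_apply, hG0_0, hG0_2]
        simp only [hf₂, map_add, map_mul, Polynomial.aeval_C, Polynomial.aeval_X]
        rw [mul_add, hYT1, ← Algebra.commutes c Y1,
          mul_add (algebraMap K _ p) T1 (algebraMap K _ c),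
          add_mul (algebraMap K _ p * T1 + algebraMap K _ p * algebraMap K _ c)
            (algebraMap K _ k) Y1,
          add_mul (algebraMap K _ p * T1) (algebraMap K _ p * algebraMap K _ c) Y1,
          add_assoc, ← add_mul (algebraMap K _ p * algebraMap K _ c) (algebraMap K _ k) Y1,
          ← map_mul, ← map_add, hck]
    | r3 =>
        simp only [map_sub, map_mul, map_smul]
        rw [← Polynomial.aeval_algHom_apply, hG0_0, hG0_1, hG0_2, hYX1]
        refine Eq.symm ?_
        calc (aeval (T1 + algebraMap K _ c)) g₂
            = aeval (aeval (T1 + algebraMap K (QGH K q f₁ g) c) (X - C c)) g :=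
              Polynomial.aeval_comp _
          _ = aeval T1 g := by simp
  let F : QGH K q f₁ g →ₐ[K] QGH K q f₂ g₂ := RingQuot.liftAlgHom K ⟨F0, hF⟩
  let G : QGH K q f₂ g₂ →ₐ[K] QGH K q f₁ g := RingQuot.liftAlgHom K ⟨G0, hG⟩
  have hFgen : ∀ x, F (RingQuot.mkAlgHom K (qghRel K q f₁ g) x) = F0 x := fun x =>
    RingQuot.liftAlgHom_mkAlgHom_apply K F0 hF x
  have hGgen : ∀ x, G (RingQuot.mkAlgHom K (qghRel K q f₂ g₂) x) = G0 x := fun x =>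
    RingQuot.liftAlgHom_mkAlgHom_apply K G0 hG x
  have hGF : G.comp F = AlgHom.id K _ := by
    apply RingQuot.ringQuot_ext'
    apply FreeAlgebra.hom_ext
    funext i
    fin_cases i <;>
      simp [AlgHom.comp_apply, hFgen, hGgen, hF0_0, hF0_1, hF0_2, hG0_0, hG0_1, hG0_2,
        map_sub, map_add, hT1, hX1, hY1, hT2, hX2, hY2, qghGen]
  have hFG : F.comp G = AlgHom.id K _ := by
    apply RingQuot.ringQuot_ext'
    apply FreeAlgebra.hom_ext
    funext i
    fin_cases i <;>
      simp [AlgHom.comp_apply, hFgen, hGgen, hF0_0, hF0_1, hF0_2, hG0_0, hG0_1, hG0_2,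
        map_sub, map_add, hT1, hX1, hY1, hT2, hX2, hY2, qghGen]
  refine ⟨AlgEquiv.ofAlgHom F G hFG hGF, ?_, ?_, ?_⟩
  · show F (qghGen K q f₁ g 0) = _
    rw [← hT1, hT1, qghGen, hFgen, hF0_0, Algebra.algebraMap_eq_smul_one, hT2]
  · show F (qghGen K q f₁ g 1) = _
    rw [← hX1, hX1, qghGen, hFgen, hF0_1, hX2]
  · show F (qghGen K q f₁ g 2) = _
    rw [← hY1, hY1, qghGen, hFgen, hF0_2, hY2]

end
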